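/- arXiv:2203.17107 — 2 statements merged into one kernel-verified Lean document; each statement's English description precedes it below -/
import Mathlib

section
/- Let G ⊆ F be a sub-σ-algebra, h an L-bounded normal integrand on ℝⁿ, and ĥ a B(ℝⁿ)⊗G-measurable normal integrand. If ĥ(x(ω),ω) = E^G[h(x(·),·)](ω) for a.e. ω holds for every bounded G-measurable x : Ω → ℝⁿ, then ĥ is a G-conditional expectation of h, i.e., the same identity holds for every G-measurable x : Ω → ℝⁿ for which ω ↦ h(x(ω),ω) is quasi-integrable. In particular, if ω ↦ h(x(ω),ω) is G-measurable for every bounded G-measurable x, then h itself is a G-conditional expectation of h. -/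
open MeasureTheory ENNReal
open scoped RealInnerProductSpace

noncomputable section

namespace PaperDP

variable {Ω : Type*}

/-- The positive part of an extended real number, as an element of `ℝ≥0∞`. -/
def ePos (x : EReal) : ℝ≥0∞ := if x = ⊤ then ⊤ else ENNReal.ofReal x.toReal

/-- The extended integral of an extended-real-valued function: it is `+∞` unless the
positive part of the integrand is integrable, in which case it is the difference of the
integrals of the positive and negative parts. -/
def EInt {mΩ : MeasurableSpace Ω} (μ : Measure Ω) (ξ : Ω → EReal) : EReal :=
  if (∫⁻ ω, ePos (ξ ω) ∂μ) = ⊤ then ⊤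
  else ((∫⁻ ω, ePos (ξ ω) ∂μ : ℝ≥0∞) : EReal) - ((∫⁻ ω, ePos (-(ξ ω)) ∂μ : ℝ≥0∞) : EReal)

/-- An extended-real-valued random variable is quasi-integrable if its positive part or
its negative part is integrable. -/
def QuasiIntegrable {mΩ : MeasurableSpace Ω} (μ : Measure Ω) (ξ : Ω → EReal) : Prop :=
  (∫⁻ ω, ePos (ξ ω) ∂μ) ≠ ⊤ ∨ (∫⁻ ω, ePos (-(ξ ω)) ∂μ) ≠ ⊤

/-- `ξ'` is a version of the `G`-conditional expectation of the extended-real random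
variable `ξ`: it is `G`-measurable and satisfies `E[α ξ'] = E[α ξ]` for every bounded
nonnegative `G`-measurable real `α`. -/
def IsCondExpER {mΩ : MeasurableSpace Ω} (μ : Measure Ω) (G : MeasurableSpace Ω)
    (ξ ξ' : Ω → EReal) : Prop :=
  Measurable[G] ξ' ∧
  ∀ α : Ω → ℝ, Measurable[G] α → (∀ ω, 0 ≤ α ω) → (∃ C, ∀ ω, α ω ≤ C) →
    EInt μ (fun ω => (α ω : EReal) * ξ' ω) = EInt μ (fun ω => (α ω : EReal) * ξ ω)

/-- A normal integrand with respect to the σ-algebra `m` on `Ω`: a jointly measurable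
function (with respect to `B(E) ⊗ m`) with values in `ℝ ∪ {+∞}` which is lower
semicontinuous in its first argument. -/
def IsNormalIntegrand {E : Type*} [TopologicalSpace E] [MeasurableSpace E]
    (m : MeasurableSpace Ω) (h : E → Ω → EReal) : Prop :=
  Measurable[MeasurableSpace.prod inferInstance m] (fun p : E × Ω => h p.1 p.2) ∧
  (∀ ω, LowerSemicontinuous fun x => h x ω) ∧ ∀ x ω, h x ω ≠ ⊥

/-- `h` is L-bounded: `h(x,ω) ≥ -ρ(ω)‖x‖ - m(ω)` for integrable nonnegative `ρ, m`. -/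
def LBounded {E : Type*} [NormedAddCommGroup E] {mΩ : MeasurableSpace Ω} (μ : Measure Ω)
    (h : E → Ω → EReal) : Prop :=
  ∃ ρ m : Ω → ℝ, Integrable ρ μ ∧ Integrable m μ ∧ (∀ ω, 0 ≤ ρ ω) ∧ (∀ ω, 0 ≤ m ω) ∧
    ∀ᵐ ω ∂μ, ∀ x : E, (↑(-(ρ ω * ‖x‖ + m ω)) : EReal) ≤ h x ω

/-- `hG` is a `G`-conditional expectation of the normal integrand `h`: it is a
`B(E) ⊗ G`-measurable normal integrand such that `hG(x(·),·)` is a version of the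
`G`-conditional expectation of `h(x(·),·)` for every `G`-measurable `x` for which
`h(x(·),·)` is quasi-integrable. -/
def IsCondNI {E : Type*} [TopologicalSpace E] [MeasurableSpace E] {mΩ : MeasurableSpace Ω}
    (μ : Measure Ω) (G : MeasurableSpace Ω) (h hG : E → Ω → EReal) : Prop :=
  IsNormalIntegrand G hG ∧
  ∀ x : Ω → E, Measurable[G] x → QuasiIntegrable μ (fun ω => h (x ω) ω) →
    IsCondExpER μ G (fun ω => h (x ω) ω) (fun ω => hG (x ω) ω)

/-- The recession function of `g`: `g^∞(y) = sup_{r>0} (g(z + r y) - g(z))/r`, where `z`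
is any point with `g(z) < ∞` (for a proper lsc convex function the value does not depend
on the choice of `z`; we take the infimum over all such `z`). -/
def recessionFn {E : Type*} [AddCommGroup E] [Module ℝ E] (g : E → EReal) (y : E) : EReal :=
  ⨅ z : {z : E // g z < ⊤}, ⨆ r : {r : ℝ // 0 < r},
    ((r.1⁻¹ : ℝ) : EReal) * (g (z.1 + r.1 • y) - g z.1)

/-- Convexity of an extended-real-valued function. -/
def ConvexEFn {E : Type*} [AddCommGroup E] [Module ℝ E] (g : E → EReal) : Prop :=
  ∀ x y : E, ∀ a b : ℝ, 0 ≤ a → 0 ≤ b → a + b = 1 →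
    g (a • x + b • y) ≤ (a : EReal) * g x + (b : EReal) * g y

/-- A convex integrand: `h(·,ω)` is convex for every `ω`. -/
def ConvexIntegrand {E : Type*} [AddCommGroup E] [Module ℝ E]
    (h : E → Ω → EReal) : Prop :=
  ∀ ω, ConvexEFn (fun x => h x ω)


/- ========== auxiliary lemmas ========== -/
section Aux

@[simp] lemma ePos_top : ePos ⊤ = ⊤ := if_pos rfl
@[simp] lemma ePos_bot : ePos ⊥ = 0 := by simp [ePos]
@[simp] lemma ePos_coe (r : ℝ) : ePos r = ENNReal.ofReal r := by simp [ePos]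
@[simp] lemma ePos_zero : ePos 0 = 0 := by simp [ePos]

lemma ePos_nonpos {z : EReal} (hz : z ≤ 0) : ePos z = 0 := by
  induction z using EReal.rec with
  | bot => simp
  | coe r => simp [ENNReal.ofReal_eq_zero.2 (EReal.coe_nonpos.1 hz)]
  | top => exact absurd hz (by simp)

lemma ePos_coe_mul (c : ℝ) (hc : 0 ≤ c) (z : EReal) :
    ePos ((c:EReal)*z) = ENNReal.ofReal c * ePos z := by
  rcases eq_or_lt_of_le hc with h | h
  · simp [← h]
  induction z using EReal.rec with
  | bot => rw [EReal.coe_mul_bot_of_pos h]; simp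
  | coe r => rw [← EReal.coe_mul, ePos_coe, ePos_coe, ENNReal.ofReal_mul hc]
  | top =>
      rw [EReal.coe_mul_top_of_pos h, ePos_top]
      exact (ENNReal.mul_top (by simp [ENNReal.ofReal_eq_zero, not_le, h])).symm

lemma ePos_neg_coe_mul (c : ℝ) (hc : 0 ≤ c) (z : EReal) :
    ePos (-((c:EReal)*z)) = ENNReal.ofReal c * ePos (-z) := by
  rw [← mul_neg, ePos_coe_mul c hc]

lemma measurable_ePos : Measurable ePos := by
  unfold ePos
  refine Measurable.ite ?_ measurable_const (measurable_ereal_toReal.ennreal_ofReal)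
  refine (show MeasurableSet {x : EReal | x = ⊤} from ?_)
  simp only [Set.setOf_eq_eq_singleton]; exact measurableSet_singleton (⊤ : EReal)

lemma coe_ennreal_eq_real {a : ℝ≥0∞} (ha : a ≠ ⊤) : (a : EReal) = ((a.toReal : ℝ) : EReal) := by
  rw [← ENNReal.ofReal_toReal ha, EReal.coe_ennreal_ofReal,
    ENNReal.toReal_ofReal ENNReal.toReal_nonneg, max_eq_left ENNReal.toReal_nonneg]

/-- The primitive combination appearing in `EInt`. -/
def F (a b : ℝ≥0∞) : EReal := if a = ⊤ then ⊤ else (a : EReal) - (b : EReal)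

lemma EInt_eq_F {mΩ : MeasurableSpace Ω} (μ : Measure Ω) (ξ : Ω → EReal) :
    EInt μ ξ = F (∫⁻ ω, ePos (ξ ω) ∂μ) (∫⁻ ω, ePos (-(ξ ω)) ∂μ) := rfl

lemma F_fin_fin {a b : ℝ≥0∞} (ha : a ≠ ⊤) (hb : b ≠ ⊤) :
    F a b = ((a.toReal - b.toReal : ℝ) : EReal) := by
  rw [F, if_neg ha, coe_ennreal_eq_real ha, coe_ennreal_eq_real hb, ← EReal.coe_sub]

lemma F_eq_iff_of_ne_top_right {a b c d : ℝ≥0∞} (hb : b ≠ ⊤) (hd : d ≠ ⊤) :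
    F a b = F c d ↔ a + d = c + b := by
  by_cases ha : a = ⊤
  · subst ha
    by_cases hc : c = ⊤
    · subst hc; simp [F]
    · rw [F_fin_fin hc hd, F, if_pos rfl]
      simp only [top_add]
      constructor
      · intro hh; exact absurd hh.symm (EReal.coe_ne_top _)
      · intro hh; exact absurd hh.symm (by simp [ENNReal.add_eq_top, hc, hb])
  · by_cases hc : c = ⊤
    · subst hc
      rw [F_fin_fin ha hb, F, if_pos rfl]
      simp only [top_add]
      constructor
      · intro hh; exact absurd hh (EReal.coe_ne_top _)
      · intro hh; exact absurd hh (by simp [ENNReal.add_eq_top, ha, hd])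
    · rw [F_fin_fin ha hb, F_fin_fin hc hd, EReal.coe_eq_coe_iff]
      rw [← ENNReal.toReal_eq_toReal_iff' (by simp [ENNReal.add_eq_top, ha, hd])
          (by simp [ENNReal.add_eq_top, hc, hb]),
        ENNReal.toReal_add ha hd, ENNReal.toReal_add hc hb]
      constructor <;> intro hh <;> linarith

lemma F_eq_iff_of_ne_top_left {a b c d : ℝ≥0∞} (ha : a ≠ ⊤) (hc : c ≠ ⊤) :
    F a b = F c d ↔ a + d = c + b := by
  by_cases hb : b = ⊤
  · subst hb
    by_cases hd : d = ⊤
    · subst hd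
      simp only [F, if_neg ha, if_neg hc, EReal.coe_ennreal_top, EReal.sub_top]
      simp
    · rw [F, F, if_neg ha, if_neg hc, EReal.coe_ennreal_top, EReal.sub_top,
        coe_ennreal_eq_real hc, coe_ennreal_eq_real hd, ← EReal.coe_sub]
      constructor
      · intro hh; exact absurd hh.symm (EReal.coe_ne_bot _)
      · intro hh; exact absurd hh (by simp [ENNReal.add_eq_top, ha, hd])
  · by_cases hd : d = ⊤
    · subst hd
      rw [F, F, if_neg ha, if_neg hc, EReal.coe_ennreal_top, EReal.sub_top,
        coe_ennreal_eq_real ha, coe_ennreal_eq_real hb, ← EReal.coe_sub]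
      constructor
      · intro hh; exact absurd hh (EReal.coe_ne_bot _)
      · intro hh; exact absurd hh.symm (by simp [ENNReal.add_eq_top, hc, hb])
    · exact F_eq_iff_of_ne_top_right hb hd

lemma iSup_lintegral_indicator {mΩ : MeasurableSpace Ω} (μ : Measure Ω)
    (f : Ω → ℝ≥0∞) (hf : Measurable f) (A : ℕ → Set Ω) (hA : ∀ k, MeasurableSet (A k))
    (hmono : Monotone A) (hsupp : ∀ ω, ω ∉ (⋃ k, A k) → f ω = 0) :
    (⨆ k, ∫⁻ ω, (A k).indicator f ω ∂μ) = ∫⁻ ω, f ω ∂μ := by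
  rw [← lintegral_iSup (fun k => hf.indicator (hA k))
      (fun i j hij => Set.indicator_le_indicator_of_subset (hmono hij) (fun _ => zero_le))]
  congr 1
  funext ω
  by_cases hω : ω ∈ ⋃ k, A k
  · obtain ⟨k, hk⟩ := Set.mem_iUnion.1 hω
    apply le_antisymm
    · exact iSup_le fun j => Set.indicator_le_self' (fun _ _ => zero_le) ω
    · rw [← Set.indicator_of_mem hk f]
      exact le_iSup (fun j => (A j).indicator f ω) k
  · have hnot : ∀ k, ω ∉ A k := fun k hk => hω (Set.mem_iUnion.2 ⟨k, hk⟩)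
    simp [Set.indicator_of_notMem, hnot, hsupp ω hω]

lemma measurable_comp_pair {E : Type*} [MeasurableSpace E] {G : MeasurableSpace Ω}
    {f : E × Ω → EReal} (hf : Measurable[MeasurableSpace.prod inferInstance G] f)
    {x : Ω → E} (hx : Measurable[G] x) : Measurable[G] fun ω => f (x ω, ω) := by
  have hpair : @Measurable Ω (E × Ω) G (MeasurableSpace.prod inferInstance G)
      (fun ω => (x ω, ω)) := Measurable.prodMk hx measurable_id
  exact hf.comp hpair

lemma measurable_of_eventually_trunc {G : MeasurableSpace Ω} {g : ℕ → Ω → EReal} {ξ : Ω → EReal}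
    (hg : ∀ k, Measurable[G] (g k))
    (hev : ∀ ω, ∃ K, ∀ k, K ≤ k → g k ω = ξ ω) : Measurable[G] ξ := by
  letI := G
  have hrep : ξ = fun ω => ⨅ m, ⨆ j, g (m + j) ω := by
    funext ω
    obtain ⟨K, hK⟩ := hev ω
    apply le_antisymm
    · refine le_iInf fun m => ?_
      have h1 : g (m + K) ω = ξ ω := hK _ (Nat.le_add_left K m)
      rw [← h1]
      exact le_iSup (fun j => g (m + j) ω) K
    · refine iInf_le_of_le K (iSup_le fun j => le_of_eq (hK (K + j) (Nat.le_add_right K j)))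
  rw [hrep]
  exact Measurable.iInf fun m => Measurable.iSup fun j => hg (m + j)

end Aux


section Main

variable {mΩ : MeasurableSpace Ω}

lemma aux_main (μ : Measure Ω) (G : MeasurableSpace Ω) (hG : G ≤ mΩ) {n : ℕ}
    {h hhat : EuclideanSpace ℝ (Fin n) → Ω → EReal}
    (hNI : IsNormalIntegrand mΩ h)
    (hhatNI : IsNormalIntegrand G hhat)
    (htest : ∀ x : Ω → EuclideanSpace ℝ (Fin n), Measurable[G] x →
      (∃ C, ∀ ω, ‖x ω‖ ≤ C) →
      IsCondExpER μ G (fun ω => h (x ω) ω) (fun ω => hhat (x ω) ω))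
    (x : Ω → EuclideanSpace ℝ (Fin n)) (hx : Measurable[G] x)
    (hqi : QuasiIntegrable μ (fun ω => h (x ω) ω)) :
    IsCondExpER μ G (fun ω => h (x ω) ω) (fun ω => hhat (x ω) ω) := by
  classical
  have hxΩ : Measurable[mΩ] x := hx.mono hG le_rfl
  set ξ : Ω → EReal := fun ω => h (x ω) ω with hξdef
  set ζ : Ω → EReal := fun ω => hhat (x ω) ω with hζdef
  have hξm : Measurable[mΩ] ξ := measurable_comp_pair hNI.1 hxΩ
  have hζG : Measurable[G] ζ := measurable_comp_pair hhatNI.1 hx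
  have hζm : Measurable[mΩ] ζ := hζG.mono hG le_rfl
  set A : ℕ → Set Ω := fun k => {ω | ‖x ω‖ ≤ (k:ℝ)} with hAdef
  have hAG : ∀ k, MeasurableSet[G] (A k) := fun k => measurableSet_le hx.norm measurable_const
  have hAm : ∀ k, MeasurableSet[mΩ] (A k) := fun k => hG _ (hAG k)
  have hAmono : Monotone A := by
    intro i j hij ω hω
    simp only [hAdef, Set.mem_setOf_eq] at hω ⊢
    exact le_trans hω (Nat.cast_le.2 hij)
  have hAcov : ∀ ω, ∃ k, ω ∈ A k := fun ω => exists_nat_ge ‖x ω‖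
  set xk : ℕ → Ω → EuclideanSpace ℝ (Fin n) := fun k ω => if ω ∈ A k then x ω else 0
    with hxkdef
  have hxkG : ∀ k, Measurable[G] (xk k) := fun k => Measurable.ite (hAG k) hx measurable_const
  have hxkbd : ∀ k ω, ‖xk k ω‖ ≤ (k:ℝ) := by
    intro k ω
    by_cases hω : ω ∈ A k
    · rw [hxkdef]; simp only [if_pos hω]; exact hω
    · rw [hxkdef]; simp only [if_neg hω, norm_zero]; exact Nat.cast_nonneg k
  have hxkeq : ∀ k ω, ω ∈ A k → xk k ω = x ω := fun k ω hω => if_pos hω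
  have htestk : ∀ k, IsCondExpER μ G (fun ω => h (xk k ω) ω) (fun ω => hhat (xk k ω) ω) :=
    fun k => htest (xk k) (hxkG k) ⟨k, hxkbd k⟩
  -- the key identity, for every k and every bounded nonnegative G-measurable α
  have key : ∀ (k : ℕ) (α : Ω → ℝ), Measurable[G] α → (∀ ω, 0 ≤ α ω) → (∃ C, ∀ ω, α ω ≤ C) →
      F (∫⁻ ω, (A k).indicator (fun ω' => ENNReal.ofReal (α ω') * ePos (ζ ω')) ω ∂μ)
        (∫⁻ ω, (A k).indicator (fun ω' => ENNReal.ofReal (α ω') * ePos (-(ζ ω'))) ω ∂μ) =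
      F (∫⁻ ω, (A k).indicator (fun ω' => ENNReal.ofReal (α ω') * ePos (ξ ω')) ω ∂μ)
        (∫⁻ ω, (A k).indicator (fun ω' => ENNReal.ofReal (α ω') * ePos (-(ξ ω'))) ω ∂μ) := by
    rintro k α hαG hα0 ⟨C, hC⟩
    set β : Ω → ℝ := fun ω => if ω ∈ A k then α ω else 0 with hβdef
    have hβG : Measurable[G] β := Measurable.ite (hAG k) hαG measurable_const
    have hβ0 : ∀ ω, 0 ≤ β ω := by
      intro ω; rw [hβdef]; by_cases hω : ω ∈ A k
      · simp only [if_pos hω]; exact hα0 ω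
      · simp only [if_neg hω]; exact le_rfl
    have hβbd : ∃ C', ∀ ω, β ω ≤ C' := by
      refine ⟨max C 0, fun ω => ?_⟩
      rw [hβdef]; by_cases hω : ω ∈ A k
      · simp only [if_pos hω]; exact le_max_of_le_left (hC ω)
      · simp only [if_neg hω]; exact le_max_right C 0
    have heq := (htestk k).2 β hβG hβ0 hβbd
    rw [EInt_eq_F, EInt_eq_F] at heq
    have conv : ∀ (g : EuclideanSpace ℝ (Fin n) → Ω → EReal),
        (∫⁻ ω, ePos ((β ω : EReal) * g (xk k ω) ω) ∂μ) =
          ∫⁻ ω, (A k).indicator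
            (fun ω' => ENNReal.ofReal (α ω') * ePos (g (x ω') ω')) ω ∂μ := by
      intro g
      refine lintegral_congr fun ω => ?_
      by_cases hω : ω ∈ A k
      · rw [Set.indicator_of_mem hω, hβdef]
        simp only [if_pos hω, hxkeq k ω hω]
        exact ePos_coe_mul (α ω) (hα0 ω) _
      · rw [Set.indicator_of_notMem hω, hβdef]
        simp only [if_neg hω, EReal.coe_zero, zero_mul, ePos_zero]
    have convn : ∀ (g : EuclideanSpace ℝ (Fin n) → Ω → EReal),
        (∫⁻ ω, ePos (-((β ω : EReal) * g (xk k ω) ω)) ∂μ) =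
          ∫⁻ ω, (A k).indicator
            (fun ω' => ENNReal.ofReal (α ω') * ePos (-(g (x ω') ω'))) ω ∂μ := by
      intro g
      refine lintegral_congr fun ω => ?_
      by_cases hω : ω ∈ A k
      · rw [Set.indicator_of_mem hω, hβdef]
        simp only [if_pos hω, hxkeq k ω hω]
        exact ePos_neg_coe_mul (α ω) (hα0 ω) _
      · rw [Set.indicator_of_notMem hω, hβdef]
        simp only [if_neg hω, EReal.coe_zero, zero_mul, neg_zero, ePos_zero]
    rw [conv hhat, convn hhat, conv h, convn h] at heq
    exact heq

  have transfer_neg : (∫⁻ ω, ePos (-(ξ ω)) ∂μ) ≠ ⊤ →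
      (∫⁻ ω, ePos (-(ζ ω)) ∂μ) ≤ ∫⁻ ω, ePos (-(ξ ω)) ∂μ := by
    intro hN'
    set S : Set Ω := {ω | ζ ω < 0} with hSdef
    have hSG : MeasurableSet[G] S := measurableSet_lt hζG measurable_const
    have hBG : ∀ k, MeasurableSet[G] (A k ∩ S) := fun k => (hAG k).inter hSG
    have hrep : (∫⁻ ω, ePos (-(ζ ω)) ∂μ) =
        ⨆ k, ∫⁻ ω, (A k ∩ S).indicator (fun ω' => ePos (-(ζ ω'))) ω ∂μ := by
      refine (iSup_lintegral_indicator μ _ (measurable_ePos.comp (measurable_neg.comp hζm))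
        (fun k => A k ∩ S) (fun k => hG _ (hBG k))
        (fun i j hij => Set.inter_subset_inter (hAmono hij) le_rfl) ?_).symm
      intro ω hω
      have hpos : ¬ ζ ω < 0 := by
        intro hlt
        obtain ⟨k, hk⟩ := hAcov ω
        exact hω (Set.mem_iUnion.2 ⟨k, hk, hlt⟩)
      refine ePos_nonpos ?_
      rw [← neg_zero]
      exact EReal.neg_le_neg_iff.2 (not_lt.1 hpos)
    rw [hrep]
    refine iSup_le fun k => ?_
    set α : Ω → ℝ := fun ω => if ω ∈ A k ∩ S then (1:ℝ) else 0 with hαdef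
    have hkey := key k α (Measurable.ite (hBG k) measurable_const measurable_const)
      (fun ω => by rw [hαdef]; dsimp only; split_ifs <;> norm_num)
      ⟨1, fun ω => by rw [hαdef]; dsimp only; split_ifs <;> norm_num⟩
    have hpos0 : (∫⁻ ω, (A k).indicator
        (fun ω' => ENNReal.ofReal (α ω') * ePos (ζ ω')) ω ∂μ) = 0 := by
      rw [← lintegral_zero]
      refine lintegral_congr fun ω => ?_
      by_cases hω : ω ∈ A k
      · rw [Set.indicator_of_mem hω]
        by_cases hω' : ω ∈ A k ∩ S
        · rw [hαdef]; dsimp only; rw [if_pos hω', ePos_nonpos (le_of_lt hω'.2)]; simp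
        · rw [hαdef]; dsimp only; rw [if_neg hω']; simp
      · rw [Set.indicator_of_notMem hω]
    have hneg : (∫⁻ ω, (A k).indicator
        (fun ω' => ENNReal.ofReal (α ω') * ePos (-(ζ ω'))) ω ∂μ) =
        ∫⁻ ω, (A k ∩ S).indicator (fun ω' => ePos (-(ζ ω'))) ω ∂μ := by
      refine lintegral_congr fun ω => ?_
      by_cases hω' : ω ∈ A k ∩ S
      · rw [Set.indicator_of_mem hω'.1, Set.indicator_of_mem hω', hαdef]
        dsimp only; rw [if_pos hω']
        norm_num
      · rw [Set.indicator_of_notMem hω']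
        by_cases hω : ω ∈ A k
        · rw [Set.indicator_of_mem hω, hαdef]; dsimp only; rw [if_neg hω']; simp
        · rw [Set.indicator_of_notMem hω]
    have hnbd : (∫⁻ ω, (A k).indicator
        (fun ω' => ENNReal.ofReal (α ω') * ePos (-(ξ ω'))) ω ∂μ) ≤
        ∫⁻ ω, ePos (-(ξ ω)) ∂μ := by
      refine lintegral_mono fun ω => ?_
      by_cases hω : ω ∈ A k
      · rw [Set.indicator_of_mem hω, hαdef]
        dsimp only; split_ifs <;> simp
      · rw [Set.indicator_of_notMem hω]; exact zero_le
    rw [hpos0, hneg] at hkey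
    have hF0 : ∀ m : ℝ≥0∞, F 0 m = -(m : EReal) := by
      intro m
      rw [F, if_neg (by simp : (0:ℝ≥0∞) ≠ ⊤), EReal.coe_ennreal_zero, zero_sub]
    have hnegtop : ∀ m : ℝ≥0∞, -(m : EReal) ≠ ⊤ := fun m => by
      simp [EReal.coe_ennreal_ne_bot]
    have hp : (∫⁻ ω, (A k).indicator
        (fun ω' => ENNReal.ofReal (α ω') * ePos (ξ ω')) ω ∂μ) ≠ ⊤ := by
      intro hp
      rw [hF0, hp, F, if_pos rfl] at hkey
      exact hnegtop _ hkey
    rw [hF0, F, if_neg hp] at hkey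
    have h1 : -((∫⁻ ω, (A k).indicator
        (fun ω' => ENNReal.ofReal (α ω') * ePos (-(ξ ω'))) ω ∂μ : ℝ≥0∞) : EReal) ≤
        -((∫⁻ ω, (A k ∩ S).indicator (fun ω' => ePos (-(ζ ω'))) ω ∂μ : ℝ≥0∞) : EReal) := by
      rw [hkey]
      calc -((∫⁻ ω, (A k).indicator
            (fun ω' => ENNReal.ofReal (α ω') * ePos (-(ξ ω'))) ω ∂μ : ℝ≥0∞) : EReal)
          = 0 - _ := (zero_sub _).symm
        _ ≤ _ - _ := EReal.sub_le_sub (EReal.coe_ennreal_nonneg _) le_rfl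
    exact le_trans
      (EReal.coe_ennreal_le_coe_ennreal_iff.1 (EReal.neg_le_neg_iff.1 h1)) hnbd

  have transfer_pos : (∫⁻ ω, ePos (ξ ω) ∂μ) ≠ ⊤ →
      (∫⁻ ω, ePos (ζ ω) ∂μ) ≤ ∫⁻ ω, ePos (ξ ω) ∂μ := by
    intro hP'
    set S : Set Ω := {ω | 0 < ζ ω} with hSdef
    have hSG : MeasurableSet[G] S := measurableSet_lt measurable_const hζG
    have hBG : ∀ k, MeasurableSet[G] (A k ∩ S) := fun k => (hAG k).inter hSG
    have hrep : (∫⁻ ω, ePos (ζ ω) ∂μ) =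
        ⨆ k, ∫⁻ ω, (A k ∩ S).indicator (fun ω' => ePos (ζ ω')) ω ∂μ := by
      refine (iSup_lintegral_indicator μ _ (measurable_ePos.comp hζm)
        (fun k => A k ∩ S) (fun k => hG _ (hBG k))
        (fun i j hij => Set.inter_subset_inter (hAmono hij) le_rfl) ?_).symm
      intro ω hω
      have hpos : ¬ 0 < ζ ω := by
        intro hlt
        obtain ⟨k, hk⟩ := hAcov ω
        exact hω (Set.mem_iUnion.2 ⟨k, hk, hlt⟩)
      exact ePos_nonpos (not_lt.1 hpos)
    rw [hrep]
    refine iSup_le fun k => ?_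
    set α : Ω → ℝ := fun ω => if ω ∈ A k ∩ S then (1:ℝ) else 0 with hαdef
    have hkey := key k α (Measurable.ite (hBG k) measurable_const measurable_const)
      (fun ω => by rw [hαdef]; dsimp only; split_ifs <;> norm_num)
      ⟨1, fun ω => by rw [hαdef]; dsimp only; split_ifs <;> norm_num⟩
    have hneg0 : (∫⁻ ω, (A k).indicator
        (fun ω' => ENNReal.ofReal (α ω') * ePos (-(ζ ω'))) ω ∂μ) = 0 := by
      rw [← lintegral_zero]
      refine lintegral_congr fun ω => ?_
      by_cases hω : ω ∈ A k
      · rw [Set.indicator_of_mem hω]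
        by_cases hω' : ω ∈ A k ∩ S
        · rw [hαdef]; dsimp only; rw [if_pos hω']
          have hle : -(ζ ω) ≤ 0 := by
            rw [← neg_zero]
            exact EReal.neg_le_neg_iff.2 (le_of_lt hω'.2)
          rw [ePos_nonpos hle]; simp
        · rw [hαdef]; dsimp only; rw [if_neg hω']; simp
      · rw [Set.indicator_of_notMem hω]
    have hposeq : (∫⁻ ω, (A k).indicator
        (fun ω' => ENNReal.ofReal (α ω') * ePos (ζ ω')) ω ∂μ) =
        ∫⁻ ω, (A k ∩ S).indicator (fun ω' => ePos (ζ ω')) ω ∂μ := by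
      refine lintegral_congr fun ω => ?_
      by_cases hω' : ω ∈ A k ∩ S
      · rw [Set.indicator_of_mem hω'.1, Set.indicator_of_mem hω', hαdef]
        dsimp only; rw [if_pos hω']
        norm_num
      · rw [Set.indicator_of_notMem hω']
        by_cases hω : ω ∈ A k
        · rw [Set.indicator_of_mem hω, hαdef]; dsimp only; rw [if_neg hω']; simp
        · rw [Set.indicator_of_notMem hω]
    have hpbd : (∫⁻ ω, (A k).indicator
        (fun ω' => ENNReal.ofReal (α ω') * ePos (ξ ω')) ω ∂μ) ≤
        ∫⁻ ω, ePos (ξ ω) ∂μ := by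
      refine lintegral_mono fun ω => ?_
      by_cases hω : ω ∈ A k
      · rw [Set.indicator_of_mem hω, hαdef]
        dsimp only; split_ifs <;> simp
      · rw [Set.indicator_of_notMem hω]; exact zero_le
    rw [hneg0, hposeq] at hkey
    have hpne : (∫⁻ ω, (A k).indicator
        (fun ω' => ENNReal.ofReal (α ω') * ePos (ξ ω')) ω ∂μ) ≠ ⊤ :=
      fun hh => hP' (top_le_iff.1 (hh ▸ hpbd))
    have hsub_le : ((∫⁻ ω, (A k).indicator
          (fun ω' => ENNReal.ofReal (α ω') * ePos (ξ ω')) ω ∂μ : ℝ≥0∞) : EReal) -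
          ((∫⁻ ω, (A k).indicator
          (fun ω' => ENNReal.ofReal (α ω') * ePos (-(ξ ω'))) ω ∂μ : ℝ≥0∞) : EReal) ≤
        ((∫⁻ ω, (A k).indicator
          (fun ω' => ENNReal.ofReal (α ω') * ePos (ξ ω')) ω ∂μ : ℝ≥0∞) : EReal) := by
      calc _ ≤ ((∫⁻ ω, (A k).indicator
            (fun ω' => ENNReal.ofReal (α ω') * ePos (ξ ω')) ω ∂μ : ℝ≥0∞) : EReal) - 0 :=
          EReal.sub_le_sub le_rfl (EReal.coe_ennreal_nonneg _)
        _ = _ := by simp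
    have hRne : F (∫⁻ ω, (A k).indicator
          (fun ω' => ENNReal.ofReal (α ω') * ePos (ξ ω')) ω ∂μ)
          (∫⁻ ω, (A k).indicator
          (fun ω' => ENNReal.ofReal (α ω') * ePos (-(ξ ω'))) ω ∂μ) ≠ ⊤ := by
      rw [F, if_neg hpne]
      refine ne_of_lt (lt_of_le_of_lt hsub_le ?_)
      exact lt_top_iff_ne_top.2 (by simp [EReal.coe_ennreal_eq_top_iff, hpne])
    have hph : (∫⁻ ω, (A k ∩ S).indicator (fun ω' => ePos (ζ ω')) ω ∂μ) ≠ ⊤ := by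
      intro hh
      rw [F, if_pos hh] at hkey
      exact hRne hkey.symm
    rw [F, if_neg hph] at hkey
    have hcoe : ((∫⁻ ω, (A k ∩ S).indicator (fun ω' => ePos (ζ ω')) ω ∂μ : ℝ≥0∞) : EReal) ≤
        ((∫⁻ ω, (A k).indicator
          (fun ω' => ENNReal.ofReal (α ω') * ePos (ξ ω')) ω ∂μ : ℝ≥0∞) : EReal) := by
      have h0 : ((∫⁻ ω, (A k ∩ S).indicator (fun ω' => ePos (ζ ω')) ω ∂μ : ℝ≥0∞) : EReal) - 0 =
          ((∫⁻ ω, (A k ∩ S).indicator (fun ω' => ePos (ζ ω')) ω ∂μ : ℝ≥0∞) : EReal) := by simp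
      rw [EReal.coe_ennreal_zero] at hkey
      rw [← h0, hkey, F, if_neg hpne]
      exact hsub_le
    exact le_trans (EReal.coe_ennreal_le_coe_ennreal_iff.1 hcoe) hpbd

  refine ⟨hζG, ?_⟩
  rintro α hαG hα0 ⟨C, hC⟩
  have hC' : ∀ ω, α ω ≤ max C 0 := fun ω => le_max_of_le_left (hC ω)
  set u : Ω → ℝ≥0∞ := fun ω => ENNReal.ofReal (α ω) * ePos (ξ ω) with hudef
  set v : Ω → ℝ≥0∞ := fun ω => ENNReal.ofReal (α ω) * ePos (-(ξ ω)) with hvdef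
  set uh : Ω → ℝ≥0∞ := fun ω => ENNReal.ofReal (α ω) * ePos (ζ ω) with huhdef
  set vh : Ω → ℝ≥0∞ := fun ω => ENNReal.ofReal (α ω) * ePos (-(ζ ω)) with hvhdef
  have hαm : Measurable[mΩ] α := hαG.mono hG le_rfl
  have hum : Measurable[mΩ] u := hαm.ennreal_ofReal.mul (measurable_ePos.comp hξm)
  have hvm : Measurable[mΩ] v :=
    hαm.ennreal_ofReal.mul (measurable_ePos.comp (measurable_neg.comp hξm))
  have huhm : Measurable[mΩ] uh := hαm.ennreal_ofReal.mul (measurable_ePos.comp hζm)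
  have hvhm : Measurable[mΩ] vh :=
    hαm.ennreal_ofReal.mul (measurable_ePos.comp (measurable_neg.comp hζm))
  have hsupp : ∀ (f : Ω → ℝ≥0∞), ∀ ω, ω ∉ (⋃ k, A k) → f ω = 0 := fun f ω hω =>
    absurd (Set.mem_iUnion.2 (hAcov ω)) hω
  have hPsup := iSup_lintegral_indicator μ u hum A hAm hAmono (hsupp u)
  have hNsup := iSup_lintegral_indicator μ v hvm A hAm hAmono (hsupp v)
  have hPhsup := iSup_lintegral_indicator μ uh huhm A hAm hAmono (hsupp uh)
  have hNhsup := iSup_lintegral_indicator μ vh hvhm A hAm hAmono (hsupp vh)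
  have hkey : ∀ k, F (∫⁻ ω, (A k).indicator uh ω ∂μ) (∫⁻ ω, (A k).indicator vh ω ∂μ) =
      F (∫⁻ ω, (A k).indicator u ω ∂μ) (∫⁻ ω, (A k).indicator v ω ∂μ) :=
    fun k => key k α hαG hα0 ⟨C, hC⟩
  have hmono : ∀ (f : Ω → ℝ≥0∞), Monotone (fun k => ∫⁻ ω, (A k).indicator f ω ∂μ) :=
    fun f i j hij => lintegral_mono
      (Set.indicator_le_indicator_of_subset (hAmono hij) (fun _ => zero_le))
  have hind : ∀ (f : Ω → ℝ≥0∞) (k : ℕ),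
      (∫⁻ ω, (A k).indicator f ω ∂μ) ≤ ∫⁻ ω, f ω ∂μ :=
    fun f k => lintegral_mono (Set.indicator_le_self' fun _ _ => zero_le)
  have hEh : EInt μ (fun ω => ((α ω : ℝ) : EReal) * ζ ω) =
      F (∫⁻ ω, uh ω ∂μ) (∫⁻ ω, vh ω ∂μ) := by
    rw [EInt_eq_F]
    congr 1
    · exact lintegral_congr fun ω => ePos_coe_mul (α ω) (hα0 ω) _
    · exact lintegral_congr fun ω => ePos_neg_coe_mul (α ω) (hα0 ω) _
  have hE : EInt μ (fun ω => ((α ω : ℝ) : EReal) * ξ ω) =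
      F (∫⁻ ω, u ω ∂μ) (∫⁻ ω, v ω ∂μ) := by
    rw [EInt_eq_F]
    congr 1
    · exact lintegral_congr fun ω => ePos_coe_mul (α ω) (hα0 ω) _
    · exact lintegral_congr fun ω => ePos_neg_coe_mul (α ω) (hα0 ω) _
  show EInt μ (fun ω => ((α ω : ℝ) : EReal) * ζ ω) =
      EInt μ (fun ω => ((α ω : ℝ) : EReal) * ξ ω)
  rw [hEh, hE]
  have hconst_bd : ∀ (g : Ω → EReal), Measurable[mΩ] g →
      (∫⁻ ω, ENNReal.ofReal (α ω) * ePos (g ω) ∂μ) ≤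
        ENNReal.ofReal (max C 0) * ∫⁻ ω, ePos (g ω) ∂μ := by
    intro g hg
    calc (∫⁻ ω, ENNReal.ofReal (α ω) * ePos (g ω) ∂μ)
        ≤ ∫⁻ ω, ENNReal.ofReal (max C 0) * ePos (g ω) ∂μ :=
          lintegral_mono fun ω =>
            mul_le_mul_left (ENNReal.ofReal_le_ofReal (hC' ω)) _
      _ = ENNReal.ofReal (max C 0) * ∫⁻ ω, ePos (g ω) ∂μ :=
          lintegral_const_mul' _ _ ENNReal.ofReal_ne_top
  have hqi' : (∫⁻ ω, ePos (ξ ω) ∂μ) ≠ ⊤ ∨ (∫⁻ ω, ePos (-(ξ ω)) ∂μ) ≠ ⊤ := hqi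
  rcases hqi' with hP' | hN'
  · -- positive parts are finite
    have hPne : (∫⁻ ω, u ω ∂μ) ≠ ⊤ :=
      ne_top_of_le_ne_top (ENNReal.mul_ne_top ENNReal.ofReal_ne_top hP') (hconst_bd ξ hξm)
    have hPhne : (∫⁻ ω, uh ω ∂μ) ≠ ⊤ := by
      have hb := le_trans (hconst_bd ζ hζm)
        (mul_le_mul_right (transfer_pos hP') (ENNReal.ofReal (max C 0)))
      exact ne_top_of_le_ne_top (ENNReal.mul_ne_top ENNReal.ofReal_ne_top hP') hb
    have hsumk : ∀ k, (∫⁻ ω, (A k).indicator uh ω ∂μ) + (∫⁻ ω, (A k).indicator v ω ∂μ) =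
        (∫⁻ ω, (A k).indicator u ω ∂μ) + (∫⁻ ω, (A k).indicator vh ω ∂μ) := fun k =>
      (F_eq_iff_of_ne_top_left (ne_top_of_le_ne_top hPhne (hind uh k))
        (ne_top_of_le_ne_top hPne (hind u k))).1 (hkey k)
    have hlim : (∫⁻ ω, uh ω ∂μ) + (∫⁻ ω, v ω ∂μ) =
        (∫⁻ ω, u ω ∂μ) + (∫⁻ ω, vh ω ∂μ) := by
      rw [← hPhsup, ← hNsup, ← hPsup, ← hNhsup,
        ENNReal.iSup_add_iSup (fun i j => ⟨max i j,
          add_le_add (hmono uh (le_max_left i j)) (hmono v (le_max_right i j))⟩),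
        ENNReal.iSup_add_iSup (fun i j => ⟨max i j,
          add_le_add (hmono u (le_max_left i j)) (hmono vh (le_max_right i j))⟩)]
      exact iSup_congr hsumk
    exact (F_eq_iff_of_ne_top_left hPhne hPne).2 hlim
  · -- negative parts are finite
    have hNne : (∫⁻ ω, v ω ∂μ) ≠ ⊤ :=
      ne_top_of_le_ne_top (ENNReal.mul_ne_top ENNReal.ofReal_ne_top hN')
        (hconst_bd (fun ω => -(ξ ω)) (measurable_neg.comp hξm))
    have hNhne : (∫⁻ ω, vh ω ∂μ) ≠ ⊤ := by
      have hb := le_trans (hconst_bd (fun ω => -(ζ ω)) (measurable_neg.comp hζm))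
        (mul_le_mul_right (transfer_neg hN') (ENNReal.ofReal (max C 0)))
      exact ne_top_of_le_ne_top (ENNReal.mul_ne_top ENNReal.ofReal_ne_top hN') hb
    have hsumk : ∀ k, (∫⁻ ω, (A k).indicator uh ω ∂μ) + (∫⁻ ω, (A k).indicator v ω ∂μ) =
        (∫⁻ ω, (A k).indicator u ω ∂μ) + (∫⁻ ω, (A k).indicator vh ω ∂μ) := fun k =>
      (F_eq_iff_of_ne_top_right (ne_top_of_le_ne_top hNhne (hind vh k))
        (ne_top_of_le_ne_top hNne (hind v k))).1 (hkey k)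
    have hlim : (∫⁻ ω, uh ω ∂μ) + (∫⁻ ω, v ω ∂μ) =
        (∫⁻ ω, u ω ∂μ) + (∫⁻ ω, vh ω ∂μ) := by
      rw [← hPhsup, ← hNsup, ← hPsup, ← hNhsup,
        ENNReal.iSup_add_iSup (fun i j => ⟨max i j,
          add_le_add (hmono uh (le_max_left i j)) (hmono v (le_max_right i j))⟩),
        ENNReal.iSup_add_iSup (fun i j => ⟨max i j,
          add_le_add (hmono u (le_max_left i j)) (hmono vh (le_max_right i j))⟩)]
      exact iSup_congr hsumk
    exact (F_eq_iff_of_ne_top_right hNhne hNne).2 hlim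




end Main


/-- Lemma 2.2: for an L-bounded normal integrand it suffices to test
the defining property of the conditional expectation with bounded `G`-measurable
selections.  In particular, if `h(x(·),·)` is `G`-measurable for every bounded
`G`-measurable `x`, then `h` satisfies the defining identity of a `G`-conditional
expectation of itself. -/
theorem statement4 {Ω : Type*} {mΩ : MeasurableSpace Ω} (μ : Measure Ω)
    [IsProbabilityMeasure μ] (hcompl : μ.IsComplete)
    (G : MeasurableSpace Ω) (hG : G ≤ mΩ) (n : ℕ)
    (h : EuclideanSpace ℝ (Fin n) → Ω → EReal)
    (hNI : IsNormalIntegrand mΩ h) (hLB : LBounded μ h)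
    (hhat : EuclideanSpace ℝ (Fin n) → Ω → EReal)
    (hhatNI : IsNormalIntegrand G hhat)
    (htest : ∀ x : Ω → EuclideanSpace ℝ (Fin n), Measurable[G] x →
      (∃ C, ∀ ω, ‖x ω‖ ≤ C) →
      IsCondExpER μ G (fun ω => h (x ω) ω) (fun ω => hhat (x ω) ω)) :
    IsCondNI μ G h hhat ∧
    (∀ h₂ : EuclideanSpace ℝ (Fin n) → Ω → EReal,
      IsNormalIntegrand mΩ h₂ → LBounded μ h₂ →
      (∀ x : Ω → EuclideanSpace ℝ (Fin n), Measurable[G] x →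
        (∃ C, ∀ ω, ‖x ω‖ ≤ C) → Measurable[G] fun ω => h₂ (x ω) ω) →
      ∀ x : Ω → EuclideanSpace ℝ (Fin n), Measurable[G] x →
        QuasiIntegrable μ (fun ω => h₂ (x ω) ω) →
        IsCondExpER μ G (fun ω => h₂ (x ω) ω) (fun ω => h₂ (x ω) ω)) := by
  constructor
  · exact ⟨hhatNI, fun x hx hqi => aux_main μ G hG hNI hhatNI htest x hx hqi⟩
  · intro h₂ hNI₂ hLB₂ hmeas₂ x hx hqi
    refine ⟨?_, fun α hα hα0 hCb => rfl⟩
    refine measurable_of_eventually_trunc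
      (g := fun k ω => h₂ (if ‖x ω‖ ≤ (k:ℝ) then x ω else 0) ω) ?_ ?_
    · intro k
      refine hmeas₂ _ (Measurable.ite (measurableSet_le hx.norm measurable_const) hx
        measurable_const) ⟨(k:ℝ), fun ω => ?_⟩
      by_cases hω : ‖x ω‖ ≤ (k:ℝ)
      · rw [if_pos hω]; exact hω
      · rw [if_neg hω, norm_zero]; exact Nat.cast_nonneg k
    · intro ω
      obtain ⟨K, hK⟩ := exists_nat_ge ‖x ω‖
      refine ⟨K, fun k hk => ?_⟩
      show h₂ (if ‖x ω‖ ≤ (k:ℝ) then x ω else 0) ω = h₂ (x ω) ω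
      rw [if_pos (hK.trans (Nat.cast_le.2 hk))]

end PaperDP
end
end

section
/- Tower property for conditional expectations of normal integrands: let G′ ⊆ G ⊆ F be sub-σ-algebras and h an L-bounded normal integrand on ℝⁿ. If ĥ is a G-conditional expectation of h and h̄ is a G′-conditional expectation of ĥ, then h̄ is a G′-conditional expectation of h. -/
open MeasureTheory ENNReal
open scoped RealInnerProductSpace

noncomputable section

namespace PaperDP

variable {Ω : Type*}

lemma ePos_eq_zero_of_nonpos {x : EReal} (hx : x ≤ 0) : ePos x = 0 := by
  induction x using EReal.rec with
  | bot => simp [ePos]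
  | coe r =>
      have hr : r ≤ 0 := by exact_mod_cast hx
      simp [ePos, EReal.toReal_coe, ENNReal.ofReal_eq_zero.2 hr]
  | top => exact absurd hx (by simp)

lemma EInt_eq_top_iff {mΩ : MeasurableSpace Ω} (μ : Measure Ω) (ξ : Ω → EReal) :
    EInt μ ξ = ⊤ ↔ (∫⁻ ω, ePos (ξ ω) ∂μ) = ⊤ := by
  unfold EInt
  split_ifs with hp
  · simp [hp]
  · simp only [hp, iff_false]
    intro habs
    rcases eq_or_ne (∫⁻ ω, ePos (-(ξ ω)) ∂μ) ⊤ with hq | hq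
    · rw [hq, EReal.coe_ennreal_top, EReal.sub_top] at habs
      exact absurd habs (by simp)
    · have h1 : ((∫⁻ ω, ePos (ξ ω) ∂μ : ℝ≥0∞) : EReal) ≠ ⊤ := by
        simpa [EReal.coe_ennreal_eq_top_iff] using hp
      have h2 : (-((∫⁻ ω, ePos (-(ξ ω)) ∂μ : ℝ≥0∞) : EReal)) ≠ ⊤ := by
        simp [EReal.neg_eq_top_iff, EReal.coe_ennreal_ne_bot]
      have := EReal.add_lt_top h1 h2
      rw [← sub_eq_add_neg] at this
      exact absurd habs this.ne

lemma EInt_ne_bot_of {mΩ : MeasurableSpace Ω} (μ : Measure Ω) (ξ : Ω → EReal)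
    (h : (∫⁻ ω, ePos (-(ξ ω)) ∂μ) ≠ ⊤) : EInt μ ξ ≠ ⊥ := by
  unfold EInt
  split_ifs with hp
  · simp
  · rw [sub_eq_add_neg, Ne, EReal.add_eq_bot_iff]
    push_neg
    refine ⟨EReal.coe_ennreal_ne_bot _, ?_⟩
    simp [EReal.neg_eq_bot_iff, EReal.coe_ennreal_eq_top_iff, h]

/-- Theorem 2.9, tower property: if `hhat` is a `G`-conditional
expectation of the L-bounded normal integrand `h` and `hbar` is a `G'`-conditional
expectation of `hhat` for `G' ⊆ G`, then `hbar` is a `G'`-conditional expectation of `h`. -/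
theorem statement5 {Ω : Type*} {mΩ : MeasurableSpace Ω} (μ : Measure Ω)
    [IsProbabilityMeasure μ] (hcompl : μ.IsComplete)
    (G G' : MeasurableSpace Ω) (hG'G : G' ≤ G) (hG : G ≤ mΩ) (n : ℕ)
    (h : EuclideanSpace ℝ (Fin n) → Ω → EReal)
    (hNI : IsNormalIntegrand mΩ h) (hLB : LBounded μ h)
    (hhat hbar : EuclideanSpace ℝ (Fin n) → Ω → EReal)
    (hce : IsCondNI μ G h hhat) (hce' : IsCondNI μ G' hhat hbar) :
    IsCondNI μ G' h hbar := by
  obtain ⟨hbarNI, hbarCE⟩ := hce'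
  obtain ⟨hhatNI, hhatCE⟩ := hce
  refine ⟨hbarNI, ?_⟩
  intro x hx hQI
  have hxG : Measurable[G] x := hx.mono hG'G le_rfl
  -- measurability of hhat ∘ x with respect to G
  have hpair : @Measurable Ω (EuclideanSpace ℝ (Fin n) × Ω) G
      (MeasurableSpace.prod inferInstance G) (fun ω => (x ω, ω)) :=
    @Measurable.prodMk Ω G (EuclideanSpace ℝ (Fin n)) Ω _ G x id hxG
      (@measurable_id Ω G)
  have hmeas_hatx : Measurable[G] (fun ω => hhat (x ω) ω) := hhatNI.1.comp hpair
  have hceG : IsCondExpER μ G (fun ω => h (x ω) ω) (fun ω => hhat (x ω) ω) :=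
    hhatCE x hxG hQI
  -- quasi-integrability of hhat ∘ x
  have hQIhat : QuasiIntegrable μ (fun ω => hhat (x ω) ω) := by
    rcases hQI with hpos | hneg
    · left
      have h1 := hceG.2 (fun _ => 1) measurable_const (fun _ => zero_le_one)
        ⟨1, fun _ => le_rfl⟩
      simp only [EReal.coe_one, one_mul] at h1
      intro htop
      have := (EInt_eq_top_iff μ (fun ω => hhat (x ω) ω)).2 htop
      rw [h1] at this
      exact hpos ((EInt_eq_top_iff μ (fun ω => h (x ω) ω)).1 this)
    · right
      classical
      set α : Ω → ℝ := fun ω => if hhat (x ω) ω ≤ 0 then 1 else 0 with hαdef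
      have hAmeas : MeasurableSet[G] {ω | hhat (x ω) ω ≤ 0} :=
        hmeas_hatx measurableSet_Iic
      have hαmeas : Measurable[G] α := by
        exact Measurable.ite hAmeas measurable_const measurable_const
      have h2 := hceG.2 α hαmeas (fun ω => by by_cases hc : hhat (x ω) ω ≤ 0 <;>
          simp [hαdef, hc]) ⟨1, fun ω => by by_cases hc : hhat (x ω) ω ≤ 0 <;>
          simp [hαdef, hc]⟩
      -- the positive part of α • hhat∘x vanishes
      have hposzero : ∀ ω, ePos ((α ω : EReal) * hhat (x ω) ω) = 0 := by
        intro ω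
        by_cases hc : hhat (x ω) ω ≤ 0
        · have : (α ω : EReal) * hhat (x ω) ω = hhat (x ω) ω := by
            simp [hαdef, hc]
          rw [this]; exact ePos_eq_zero_of_nonpos hc
        · have : (α ω : EReal) * hhat (x ω) ω = 0 := by
            simp [hαdef, hc]
          rw [this]; exact ePos_eq_zero_of_nonpos le_rfl
      -- the negative part of α • hhat∘x equals that of hhat∘x
      have hnegeq : ∀ ω, ePos (-((α ω : EReal) * hhat (x ω) ω))
          = ePos (-(hhat (x ω) ω)) := by
        intro ω
        by_cases hc : hhat (x ω) ω ≤ 0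
        · have : (α ω : EReal) * hhat (x ω) ω = hhat (x ω) ω := by
            simp [hαdef, hc]
          rw [this]
        · have h0 : (α ω : EReal) * hhat (x ω) ω = 0 := by
            simp [hαdef, hc]
          rw [h0]
          rw [ePos_eq_zero_of_nonpos (by simp), Eq.comm]
          exact ePos_eq_zero_of_nonpos (by
            have h0' : (0 : EReal) ≤ hhat (x ω) ω := (not_le.1 hc).le
            have := EReal.neg_le.2 (by simpa using h0' : -(0 : EReal) ≤ hhat (x ω) ω)
            simpa using this)
      -- the negative part of α • h∘x is dominated by that of h∘x
      have hnegle : ∀ ω, ePos (-((α ω : EReal) * h (x ω) ω))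
          ≤ ePos (-(h (x ω) ω)) := by
        intro ω
        by_cases hc : hhat (x ω) ω ≤ 0
        · have : (α ω : EReal) * h (x ω) ω = h (x ω) ω := by
            simp [hαdef, hc]
          rw [this]
        · have h0 : (α ω : EReal) * h (x ω) ω = 0 := by
            simp [hαdef, hc]
          rw [h0]
          simp [ePos_eq_zero_of_nonpos (le_refl (0 : EReal))]
      -- hence EInt of α • h∘x is not ⊥
      have hne_bot : EInt μ (fun ω => (α ω : EReal) * h (x ω) ω) ≠ ⊥ := by
        refine EInt_ne_bot_of μ _ ?_
        refine ne_top_of_le_ne_top hneg ?_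
        exact lintegral_mono fun ω => hnegle ω
      rw [← h2] at hne_bot
      -- conclude that the negative part of hhat∘x is finite
      intro hnegtop
      apply hne_bot
      unfold EInt
      have hz : (∫⁻ ω, ePos ((α ω : EReal) * hhat (x ω) ω) ∂μ) = 0 := by
        simp only [hposzero]; exact lintegral_zero
      rw [hz]
      rw [if_neg (by simp)]
      have hq : (∫⁻ ω, ePos (-((α ω : EReal) * hhat (x ω) ω)) ∂μ) = ⊤ := by
        simp only [hnegeq]; exact hnegtop
      rw [hq]
      simp [EReal.sub_top]
  have hceG' : IsCondExpER μ G' (fun ω => hhat (x ω) ω) (fun ω => hbar (x ω) ω) :=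
    hbarCE x hx hQIhat
  refine ⟨hceG'.1, ?_⟩
  intro α hα hα0 hαb
  rw [hceG'.2 α hα hα0 hαb, hceG.2 α (hα.mono hG'G le_rfl) hα0 hαb]

end PaperDP
end
end
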